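/- Let W be an admissible double-well potential with wells a, b, fix ξ₀ ∈ [0,∞)³, and let φ(ξ) := g(ξ₀, ξ). Let Ω ⊆ ℝᵈ be a bounded open set and let u : Ω → [0,∞)³ be a bounded C¹ function with bounded derivative. Then φ∘u is differentiable almost everywhere on Ω and ∫_Ω |∇(φ∘u)(x)| dx ≤ ∫_Ω √(W(u(x)))·|∇u(x)| dx, where |∇u(x)| denotes the Frobenius (Hilbert–Schmidt) norm of the derivative of u at x. -/

import Mathlib

open MeasureTheory Filter
open Topology

noncomputable section

abbrev E3 := EuclideanSpace ℝ (Fin 3)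

/-- The nonnegative orthant `[0,∞)³`. -/
def Orthant : Set E3 := {u | ∀ i, 0 ≤ u i}

/-- `W` is an admissible double-well potential with wells `a, b ∈ [0,∞)³`. -/
structure DoubleWell (a b : E3) (W : E3 → ℝ) : Prop where
  wells_ne : a ≠ b
  wellA_mem : a ∈ Orthant
  wellB_mem : b ∈ Orthant
  nonneg : ∀ u, 0 ≤ W u
  smooth : ContDiff ℝ 1 W
  symm : ∀ (u : E3) (i : Fin 3), W (WithLp.toLp 2 (Function.update u i (-(u i)))) = W u
  zeros : ∀ u ∈ Orthant, (W u = 0 ↔ u = a ∨ u = b)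
  quadA : ∃ δ > (0 : ℝ), ∃ C > (0 : ℝ), ∀ u : E3, ‖u - a‖ < δ →
    C * ‖u - a‖ ^ 2 ≤ W u ∧ W u ≤ C⁻¹ * ‖u - a‖ ^ 2
  quadB : ∃ δ > (0 : ℝ), ∃ C > (0 : ℝ), ∀ u : E3, ‖u - b‖ < δ →
    C * ‖u - b‖ ^ 2 ≤ W u ∧ W u ≤ C⁻¹ * ‖u - b‖ ^ 2
  growth : ∃ C' > (0 : ℝ), ∃ R > (0 : ℝ), ∀ u : E3, ‖u‖ > R → C' * ‖u‖ ^ 2 ≤ W u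

/-- `γ` is an admissible Lipschitz curve from `ξ₀` to `ξ₁` inside the orthant. -/
def IsCurve (ξ₀ ξ₁ : E3) (γ : ℝ → E3) : Prop :=
  (∃ K, LipschitzWith K γ) ∧ (∀ t ∈ Set.Icc (0 : ℝ) 1, γ t ∈ Orthant) ∧
    γ 0 = ξ₀ ∧ γ 1 = ξ₁

/-- The degenerate-length of a curve with respect to the conformal metric `W ds²`. -/
def curveEnergy (W : E3 → ℝ) (γ : ℝ → E3) : ℝ :=
  ∫ t in (0 : ℝ)..1, Real.sqrt (W (γ t)) * ‖deriv γ t‖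

/-- The degenerate geodesic distance induced by `W` on the orthant. -/
def geoDist (W : E3 → ℝ) (ξ₀ ξ₁ : E3) : ℝ :=
  sInf (curveEnergy W '' {γ | IsCurve ξ₀ ξ₁ γ})


/-- The Frobenius (Hilbert–Schmidt) norm of a linear map between Euclidean spaces. -/
def frob {d : ℕ} (T : EuclideanSpace ℝ (Fin d) →L[ℝ] E3) : ℝ :=
  Real.sqrt (∑ j : Fin d, ‖T (EuclideanSpace.single j (1 : ℝ))‖ ^ 2)

lemma orthant_convex : Convex ℝ Orthant := by
  intro x hx y hy s t hs ht hst i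
  have hxy : (s • x + t • y) i = s * x i + t * y i := by
    simp [PiLp.add_apply, PiLp.smul_apply, smul_eq_mul]
  rw [hxy]
  exact add_nonneg (mul_nonneg hs (hx i)) (mul_nonneg ht (hy i))

lemma curveEnergy_nonneg (W : E3 → ℝ) (γ : ℝ → E3) : 0 ≤ curveEnergy W γ :=
  intervalIntegral.integral_nonneg (by norm_num)
    (fun t _ => mul_nonneg (Real.sqrt_nonneg _) (norm_nonneg _))

def seg (x y : E3) : ℝ → E3 := fun t => x + t • (y - x)

lemma seg_lipschitz (x y : E3) : LipschitzWith ‖y - x‖₊ (seg x y) := by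
  apply LipschitzWith.of_dist_le_mul
  intro s t
  simp only [seg, dist_eq_norm, add_sub_add_left_eq_sub, ← sub_smul, norm_smul,
    Real.norm_eq_abs, Real.dist_eq, coe_nnnorm]
  rw [mul_comm]

lemma seg_mem_orthant {x y : E3} (hx : x ∈ Orthant) (hy : y ∈ Orthant)
    {t : ℝ} (ht : t ∈ Set.Icc (0:ℝ) 1) : seg x y t ∈ Orthant := by
  have : seg x y t = (1 - t) • x + t • y := by
    simp only [seg]; module
  rw [this]
  exact orthant_convex hx hy (by linarith [ht.2]) ht.1 (by ring)

lemma isCurve_seg {x y : E3} (hx : x ∈ Orthant) (hy : y ∈ Orthant) :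
    IsCurve x y (seg x y) := by
  refine ⟨⟨_, seg_lipschitz x y⟩, fun t ht => seg_mem_orthant hx hy ht, ?_, ?_⟩ <;>
    simp [seg]

lemma geoDist_bddBelow (W : E3 → ℝ) (ξ₀ ξ₁ : E3) :
    BddBelow (curveEnergy W '' {γ | IsCurve ξ₀ ξ₁ γ}) :=
  ⟨0, by rintro e ⟨γ, -, rfl⟩; exact curveEnergy_nonneg W γ⟩

lemma geoDist_le (W : E3 → ℝ) {ξ₀ ξ₁ : E3} {γ : ℝ → E3} (h : IsCurve ξ₀ ξ₁ γ) :
    geoDist W ξ₀ ξ₁ ≤ curveEnergy W γ :=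
  csInf_le (geoDist_bddBelow W ξ₀ ξ₁) ⟨γ, h, rfl⟩

lemma deriv_comp_two_mul (γ : ℝ → E3) (t : ℝ) :
    deriv (fun s => γ (2 * s)) t = (2:ℝ) • deriv γ (2 * t) := by
  by_cases h : DifferentiableAt ℝ γ (2 * t)
  · have h2 : HasDerivAt (fun s : ℝ => 2 * s) 2 t := by
      simpa using (hasDerivAt_id t).const_mul (2:ℝ)
    exact (h.hasDerivAt.scomp t h2).deriv
  · have hne : ¬ DifferentiableAt ℝ (fun s => γ (2 * s)) t := by
      intro hd
      apply h
      have hf : DifferentiableAt ℝ (fun r : ℝ => (2:ℝ)⁻¹ * r) (2 * t) :=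
        (differentiable_id.const_mul _).differentiableAt
      have h1 : (2:ℝ)⁻¹ * (2 * t) = t := by ring
      rw [← h1] at hd
      have h2 := hd.comp (2 * t) hf
      have h3 : ((fun s => γ (2 * s)) ∘ fun r : ℝ => (2:ℝ)⁻¹ * r) = γ := by
        funext r
        show γ (2 * ((2:ℝ)⁻¹ * r)) = γ r
        congr 1; ring
      rwa [h3] at h2
    rw [deriv_zero_of_not_differentiableAt h, deriv_zero_of_not_differentiableAt hne,
      smul_zero]

set_option maxHeartbeats 1000000 in

lemma geoDist_le_segment {W : E3 → ℝ} (hWpos : ∀ u, 0 ≤ W u) (hWc : Continuous W)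
    {ξ₀ η ξ : E3} (h₀ : ξ₀ ∈ Orthant) (hη : η ∈ Orthant) (hξ : ξ ∈ Orthant)
    {S : ℝ} (hS : ∀ z ∈ segment ℝ η ξ, Real.sqrt (W z) ≤ S) :
    geoDist W ξ₀ ξ ≤ geoDist W ξ₀ η + S * ‖ξ - η‖ := by
  have hS0 : 0 ≤ S := le_trans (Real.sqrt_nonneg _) (hS η (left_mem_segment ℝ η ξ))
  have hne : (curveEnergy W '' {γ | IsCurve ξ₀ η γ}).Nonempty :=
    ⟨_, ⟨seg ξ₀ η, isCurve_seg h₀ hη, rfl⟩⟩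
  refine le_of_forall_pos_le_add fun ε hε => ?_
  obtain ⟨e, ⟨γ, hγ, rfl⟩, hlt⟩ := Real.lt_sInf_add_pos hne hε
  obtain ⟨⟨K, hK⟩, hmem, hγ0, hγ1⟩ := hγ
  set σ : ℝ → E3 := seg η ξ with hσdef
  set Γ : ℝ → E3 := fun t => if t ≤ 1/2 then γ (2*t) else σ (2*t - 1) with hΓdef
  have hσ0 : σ 0 = η := by simp [hσdef, seg]
  have hσ1 : σ 1 = ξ := by simp [hσdef, seg]
  have hσseg : ∀ s ∈ Set.Icc (0:ℝ) 1, σ s ∈ segment ℝ η ξ := by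
    intro s hs
    rw [segment_eq_image']
    exact ⟨s, hs, rfl⟩
  set N : NNReal := ‖ξ - η‖₊ with hNdef
  set L : NNReal := 2 * (K + N) with hLdef
  have hσL : LipschitzWith N σ := seg_lipschitz η ξ
  have hLval : (L:ℝ) = 2 * ((K:ℝ) + ‖ξ - η‖) := by
    rw [hLdef]; push_cast [hNdef]; ring
  have hN0 : (0:ℝ) ≤ ‖ξ - η‖ := norm_nonneg _
  have hK0 : (0:ℝ) ≤ K := K.coe_nonneg
  have key : ∀ s t : ℝ, s ≤ t → dist (Γ s) (Γ t) ≤ L * dist s t := by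
    intro s t hst
    have hdst : dist s t = t - s := by
      rw [Real.dist_eq, abs_of_nonpos (by linarith)]; ring
    by_cases h1 : t ≤ 1/2
    · have h2 : s ≤ 1/2 := le_trans hst h1
      have hd2 : dist (2*s) (2*t) = 2*(t-s) := by
        rw [Real.dist_eq, abs_of_nonpos (by linarith)]; ring
      have hb := hK.dist_le_mul (2*s) (2*t)
      rw [hd2] at hb
      simp only [hΓdef, if_pos h1, if_pos h2]
      rw [hdst, hLval]
      nlinarith
    · by_cases h2 : s ≤ 1/2
      · -- mixed case
        have htri : dist (Γ s) (Γ t) ≤ dist (γ (2*s)) (γ 1) + dist (σ 0) (σ (2*t-1)) := by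
          simp only [hΓdef, if_pos h2, if_neg h1]
          rw [hσ0, ← hγ1] at *
          exact dist_triangle _ _ _
        have hb1 := hK.dist_le_mul (2*s) 1
        have hb2 := hσL.dist_le_mul 0 (2*t-1)
        have hd1 : dist (2*s) 1 = 1 - 2*s := by
          rw [Real.dist_eq, abs_of_nonpos (by linarith)]; ring
        have hd2 : dist (0:ℝ) (2*t-1) = 2*t-1 := by
          rw [Real.dist_eq, abs_of_nonpos (by push_neg at h1; linarith)]; ring
        rw [hd1] at hb1; rw [hd2] at hb2
        push_neg at h1
        rw [hdst, hLval]
        have hNval : (N:ℝ) = ‖ξ - η‖ := by rw [hNdef]; simp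
        rw [hNval] at hb2
        calc dist (Γ s) (Γ t) ≤ K * (1-2*s) + ‖ξ - η‖ * (2*t-1) := by
              exact le_trans htri (add_le_add hb1 hb2)
          _ ≤ 2 * ((K:ℝ) + ‖ξ - η‖) * (t - s) := by nlinarith
      · push_neg at h1 h2
        have hd2 : dist (2*s-1) (2*t-1) = 2*(t-s) := by
          rw [Real.dist_eq, abs_of_nonpos (by linarith)]; ring
        have hb := hσL.dist_le_mul (2*s-1) (2*t-1)
        rw [hd2] at hb
        have hNval : (N:ℝ) = ‖ξ - η‖ := by rw [hNdef]; simp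
        rw [hNval] at hb
        simp only [hΓdef, if_neg (not_le.2 h1), if_neg (not_le.2 h2)]
        rw [hdst, hLval]
        nlinarith
  have hΓL : LipschitzWith L Γ := by
    apply LipschitzWith.of_dist_le_mul
    intro s t
    rcases le_total s t with h | h
    · exact key s t h
    · rw [dist_comm, dist_comm s t]; exact key t s h
  have hΓcurve : IsCurve ξ₀ ξ Γ := by
    refine ⟨⟨L, hΓL⟩, ?_, ?_, ?_⟩
    · intro t ht
      by_cases h1 : t ≤ 1/2
      · simp only [hΓdef, if_pos h1]
        exact hmem (2*t) ⟨by linarith [ht.1], by linarith⟩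
      · simp only [hΓdef, if_neg h1]
        push_neg at h1
        have := hσseg (2*t-1) ⟨by linarith, by linarith [ht.2]⟩
        exact (orthant_convex.segment_subset hη hξ) this
    · simp only [hΓdef, if_pos (by norm_num : (0:ℝ) ≤ 1/2)]
      simpa using hγ0
    · simp only [hΓdef, if_neg (by norm_num : ¬ (1:ℝ) ≤ 1/2)]
      norm_num [hσ1]
  have henergy : curveEnergy W Γ ≤ curveEnergy W γ + S * ‖ξ - η‖ := by
    set h : ℝ → ℝ := fun t => Real.sqrt (W (Γ t)) * ‖deriv Γ t‖ with hhdef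
    have hcontW : Continuous fun t => Real.sqrt (W (Γ t)) :=
      Real.continuous_sqrt.comp (hWc.comp hΓL.continuous)
    have hmeas : Measurable h := hcontW.measurable.mul (measurable_deriv Γ).norm
    obtain ⟨t₀, ht₀, hMW'⟩ := (isCompact_Icc (a := (0:ℝ)) (b := 1)).exists_isMaxOn
      ⟨0, by norm_num⟩ hcontW.continuousOn
    have hMW : ∀ t ∈ Set.Icc (0:ℝ) 1, Real.sqrt (W (Γ t)) ≤ Real.sqrt (W (Γ t₀)) :=
      fun t ht => hMW' ht
    set MW := Real.sqrt (W (Γ t₀)) with hMWdef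
    have hMW0 : 0 ≤ MW := Real.sqrt_nonneg _
    have hdb : ∀ t, ‖deriv Γ t‖ ≤ L := fun t => norm_deriv_le_of_lipschitz hΓL
    have hInt : ∀ p q : ℝ, p ∈ Set.Icc (0:ℝ) 1 → q ∈ Set.Icc (0:ℝ) 1 →
        IntervalIntegrable h volume p q := by
      intro p q hp hq
      rw [intervalIntegrable_iff]
      constructor
      · exact hmeas.aestronglyMeasurable.restrict
      · apply HasFiniteIntegral.restrict_of_bounded (C := MW * L)
        · rw [Set.uIoc]; exact measure_Ioc_lt_top
        · apply (ae_restrict_mem measurableSet_uIoc).mono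
          intro t ht
          rw [Set.uIoc] at ht
          have htI : t ∈ Set.Icc (0:ℝ) 1 :=
            ⟨le_trans (le_min hp.1 hq.1) ht.1.le, le_trans ht.2 (max_le hp.2 hq.2)⟩
          have hnn : 0 ≤ h t := mul_nonneg (Real.sqrt_nonneg _) (norm_nonneg _)
          rw [Real.norm_eq_abs, abs_of_nonneg hnn]
          exact mul_le_mul (hMW t htI) (hdb t) (norm_nonneg _) hMW0
    have hsplit := intervalIntegral.integral_add_adjacent_intervals
      (hInt 0 (1/2) (by norm_num) (by norm_num)) (hInt (1/2) 1 (by norm_num) (by norm_num))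
    have h1eq : ∀ t ∈ Set.Ioo (0:ℝ) (1/2),
        h t = 2 * (Real.sqrt (W (γ (2*t))) * ‖deriv γ (2*t)‖) := by
      intro t ht
      have hev : Γ =ᶠ[𝓝 t] fun s => γ (2*s) := by
        filter_upwards [Iio_mem_nhds ht.2] with s hs
        simp only [hΓdef]
        rw [if_pos (le_of_lt hs)]
      have hΓt : Γ t = γ (2*t) := by simp only [hΓdef]; rw [if_pos ht.2.le]
      show Real.sqrt (W (Γ t)) * ‖deriv Γ t‖ = _
      rw [hΓt, hev.deriv_eq, deriv_comp_two_mul, norm_smul]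
      rw [Real.norm_ofNat]
      ring
    have e1 : ∫ t in (0:ℝ)..(1/2), h t = curveEnergy W γ := by
      have h5 : ∀ᵐ t : ℝ ∂volume, t ≠ (1/2:ℝ) := by
        rw [MeasureTheory.ae_iff]
        simp only [not_ne_iff, Set.setOf_eq_eq_singleton]
        exact measure_singleton _
      have hcongr : ∫ t in (0:ℝ)..(1/2), h t
          = ∫ t in (0:ℝ)..(1/2), 2 * (Real.sqrt (W (γ (2*t))) * ‖deriv γ (2*t)‖) := by
        apply intervalIntegral.integral_congr_ae
        filter_upwards [h5] with t ht5 htmem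
        rw [Set.uIoc_of_le (by norm_num : (0:ℝ) ≤ 1/2)] at htmem
        exact h1eq t ⟨htmem.1, lt_of_le_of_ne htmem.2 ht5⟩
      rw [hcongr, intervalIntegral.integral_const_mul]
      have hcomp := intervalIntegral.integral_comp_mul_left
        (fun s => Real.sqrt (W (γ s)) * ‖deriv γ s‖) (a := 0) (b := 1/2)
        (c := (2:ℝ)) two_ne_zero
      norm_num at hcomp
      rw [hcomp]
      show 2 * (1/2 * curveEnergy W γ) = curveEnergy W γ
      ring
    have h2eq : ∀ t ∈ Set.uIoc (1/2:ℝ) 1,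
        h t = Real.sqrt (W (σ (2*t-1))) * (2 * ‖ξ - η‖) := by
      intro t ht
      rw [Set.uIoc_of_le (by norm_num : (1/2:ℝ) ≤ 1)] at ht
      have ht1 : 1/2 < t := ht.1
      have hev : Γ =ᶠ[𝓝 t] fun s => σ (2*s - 1) := by
        filter_upwards [Ioi_mem_nhds ht1] with s hs
        simp only [hΓdef]
        rw [if_neg (not_le.2 hs)]
      have hΓt : Γ t = σ (2*t-1) := by simp only [hΓdef]; rw [if_neg (not_le.2 ht1)]
      have hds : HasDerivAt (fun s : ℝ => σ (2*s - 1)) ((2:ℝ) • (ξ - η)) t := by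
        have hl : HasDerivAt (fun s : ℝ => 2*s - 1) 2 t := by
          simpa using ((hasDerivAt_id t).const_mul (2:ℝ)).sub_const 1
        have h2 := (hl.smul_const (ξ - η)).const_add η
        simpa [hσdef, seg] using h2
      show Real.sqrt (W (Γ t)) * ‖deriv Γ t‖ = _
      rw [hΓt, hev.deriv_eq, hds.deriv, norm_smul, Real.norm_ofNat]
    have e2 : ∫ t in (1/2:ℝ)..1, h t ≤ S * ‖ξ - η‖ := by
      have hcongr : ∫ t in (1/2:ℝ)..1, h t
          = ∫ t in (1/2:ℝ)..1, Real.sqrt (W (σ (2*t-1))) * (2 * ‖ξ - η‖) :=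
        intervalIntegral.integral_congr_ae (Filter.Eventually.of_forall h2eq)
      have hcσ : Continuous fun t : ℝ => Real.sqrt (W (σ (2*t-1))) * (2 * ‖ξ - η‖) := by
        apply Continuous.mul _ continuous_const
        exact Real.continuous_sqrt.comp (hWc.comp (hσL.continuous.comp (by continuity)))
      have hle : ∫ t in (1/2:ℝ)..1, Real.sqrt (W (σ (2*t-1))) * (2 * ‖ξ - η‖)
          ≤ ∫ t in (1/2:ℝ)..1, S * (2 * ‖ξ - η‖) := by
        apply intervalIntegral.integral_mono_on (by norm_num)
          (hcσ.intervalIntegrable _ _) intervalIntegrable_const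
        intro t ht
        have hmem2 : σ (2*t-1) ∈ segment ℝ η ξ :=
          hσseg _ ⟨by linarith [ht.1], by linarith [ht.2]⟩
        exact mul_le_mul_of_nonneg_right (hS _ hmem2) (by positivity)
      rw [intervalIntegral.integral_const, smul_eq_mul] at hle
      rw [hcongr]
      calc _ ≤ (1 - 1/2) * (S * (2 * ‖ξ - η‖)) := hle
        _ = S * ‖ξ - η‖ := by ring
    have hce : curveEnergy W Γ = (∫ t in (0:ℝ)..(1/2), h t) + ∫ t in (1/2:ℝ)..1, h t :=
      hsplit.symm
    rw [hce, e1]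
    linarith
  calc geoDist W ξ₀ ξ ≤ curveEnergy W Γ := geoDist_le W hΓcurve
    _ ≤ curveEnergy W γ + S * ‖ξ - η‖ := henergy
    _ ≤ (geoDist W ξ₀ η + ε) + S * ‖ξ - η‖ := by
        have hlt' : curveEnergy W γ < geoDist W ξ₀ η + ε := hlt
        linarith
    _ = geoDist W ξ₀ η + S * ‖ξ - η‖ + ε := by ring

lemma abs_geoDist_sub_le {W : E3 → ℝ} (hWpos : ∀ u, 0 ≤ W u) (hWc : Continuous W)
    {ξ₀ η ξ : E3} (h₀ : ξ₀ ∈ Orthant) (hη : η ∈ Orthant) (hξ : ξ ∈ Orthant)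
    {S : ℝ} (hS : ∀ z ∈ segment ℝ η ξ, Real.sqrt (W z) ≤ S) :
    |geoDist W ξ₀ ξ - geoDist W ξ₀ η| ≤ S * ‖ξ - η‖ := by
  have h1 := geoDist_le_segment hWpos hWc h₀ hη hξ hS
  have hS' : ∀ z ∈ segment ℝ ξ η, Real.sqrt (W z) ≤ S := by
    intro z hz; exact hS z (by rwa [segment_symm])
  have h2 := geoDist_le_segment hWpos hWc h₀ hξ hη hS'
  rw [norm_sub_rev] at h2
  rw [abs_sub_le_iff]
  exact ⟨by linarith, by linarith⟩

lemma opNorm_le_frob {d : ℕ} (T : EuclideanSpace ℝ (Fin d) →L[ℝ] E3) : ‖T‖ ≤ frob T := by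
  refine T.opNorm_le_bound (Real.sqrt_nonneg _) fun v => ?_
  have hdecomp : ∑ j : Fin d, v j • EuclideanSpace.single j (1:ℝ) = v := by
    have := (EuclideanSpace.basisFun (Fin d) ℝ).sum_repr v
    simpa [EuclideanSpace.basisFun_apply, EuclideanSpace.basisFun_repr] using this
  have hTv : T v = ∑ j : Fin d, v j • T (EuclideanSpace.single j (1:ℝ)) := by
    conv_lhs => rw [← hdecomp]
    rw [map_sum]
    simp
  have h1 : ‖T v‖ ≤ ∑ j : Fin d, |v j| * ‖T (EuclideanSpace.single j (1:ℝ))‖ := by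
    rw [hTv]
    refine le_trans (norm_sum_le _ _) ?_
    apply Finset.sum_le_sum
    intro j _
    rw [norm_smul, Real.norm_eq_abs]
  set A := ∑ j : Fin d, |v j| * ‖T (EuclideanSpace.single j (1:ℝ))‖ with hA
  have hA0 : 0 ≤ A := Finset.sum_nonneg fun j _ => mul_nonneg (abs_nonneg _) (norm_nonneg _)
  have hcs : A ^ 2 ≤ (∑ j : Fin d, |v j| ^ 2) *
      ∑ j : Fin d, ‖T (EuclideanSpace.single j (1:ℝ))‖ ^ 2 :=
    Finset.sum_mul_sq_le_sq_mul_sq _ _ _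
  have hnv : ‖v‖ = Real.sqrt (∑ j : Fin d, |v j| ^ 2) := by
    rw [EuclideanSpace.norm_eq]
    simp [Real.norm_eq_abs]
  calc ‖T v‖ ≤ A := h1
    _ = Real.sqrt (A ^ 2) := (Real.sqrt_sq hA0).symm
    _ ≤ Real.sqrt ((∑ j : Fin d, |v j| ^ 2) *
        ∑ j : Fin d, ‖T (EuclideanSpace.single j (1:ℝ))‖ ^ 2) := Real.sqrt_le_sqrt hcs
    _ = Real.sqrt (∑ j : Fin d, |v j| ^ 2) *
        Real.sqrt (∑ j : Fin d, ‖T (EuclideanSpace.single j (1:ℝ))‖ ^ 2) :=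
      Real.sqrt_mul (by positivity) _
    _ = frob T * ‖v‖ := by rw [frob, hnv]; ring

lemma frob_nonneg {d : ℕ} (T : EuclideanSpace ℝ (Fin d) →L[ℝ] E3) : 0 ≤ frob T :=
  Real.sqrt_nonneg _

lemma frob_le {d : ℕ} (T : EuclideanSpace ℝ (Fin d) →L[ℝ] E3) :
    frob T ≤ Real.sqrt d * ‖T‖ := by
  rw [frob, ← Real.sqrt_sq (norm_nonneg T), ← Real.sqrt_mul (Nat.cast_nonneg d)]
  apply Real.sqrt_le_sqrt
  calc ∑ j : Fin d, ‖T (EuclideanSpace.single j (1:ℝ))‖ ^ 2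
      ≤ ∑ _j : Fin d, ‖T‖ ^ 2 := by
        apply Finset.sum_le_sum
        intro j _
        have h := T.le_opNorm (EuclideanSpace.single j (1:ℝ))
        rw [EuclideanSpace.norm_single, norm_one, mul_one] at h
        exact pow_le_pow_left₀ (norm_nonneg _) h 2
    _ = (d : ℝ) * ‖T‖ ^ 2 := by
        rw [Finset.sum_const, Finset.card_univ, Fintype.card_fin, nsmul_eq_mul]

lemma frob_continuous {d : ℕ} {u : EuclideanSpace ℝ (Fin d) → E3}
    (hcont : Continuous fun x => fderiv ℝ u x) :
    Continuous fun x => frob (fderiv ℝ u x) := by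
  apply Real.continuous_sqrt.comp
  apply continuous_finset_sum
  intro j _
  exact ((hcont.clm_apply continuous_const).norm).pow 2

set_option maxHeartbeats 1000000 in
/-- The chain-rule inequality `∫_Ω |∇(φ∘u)| ≤ ∫_Ω √(W(u)) |∇u|`. -/
theorem geoDist_comp_chain_rule (a b : E3) (W : E3 → ℝ) (hW : DoubleWell a b W)
    (ξ₀ : E3) (hξ₀ : ξ₀ ∈ Orthant)
    (d : ℕ) (Ω : Set (EuclideanSpace ℝ (Fin d))) (hΩo : IsOpen Ω)
    (hΩb : Bornology.IsBounded Ω)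
    (u : EuclideanSpace ℝ (Fin d) → E3) (hu : ContDiff ℝ 1 u)
    (hrange : ∀ x ∈ Ω, u x ∈ Orthant)
    (hubd : ∃ Cu : ℝ, ∀ x ∈ Ω, ‖u x‖ ≤ Cu)
    (hDbd : ∃ CD : ℝ, ∀ x ∈ Ω, ‖fderiv ℝ u x‖ ≤ CD) :
    (∀ᵐ x ∂(volume.restrict Ω),
      DifferentiableAt ℝ (fun x' => geoDist W ξ₀ (u x')) x) ∧
    ∫ x in Ω, ‖fderiv ℝ (fun x' => geoDist W ξ₀ (u x')) x‖ ≤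
      ∫ x in Ω, Real.sqrt (W (u x)) * frob (fderiv ℝ u x) := by
  obtain ⟨Cu, hCu⟩ := hubd
  obtain ⟨CD, hCD⟩ := hDbd
  have hWc : Continuous W := hW.smooth.continuous
  have hWpos := hW.nonneg
  set f : EuclideanSpace ℝ (Fin d) → ℝ := fun x' => geoDist W ξ₀ (u x') with hfdef
  set Cu' : ℝ := max Cu 0 with hCu'def
  have hCu' : ∀ x ∈ Ω, u x ∈ Metric.closedBall (0:E3) Cu' := by
    intro x hx
    rw [Metric.mem_closedBall, dist_zero_right]
    exact le_trans (hCu x hx) (le_max_left _ _)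
  obtain ⟨z₀, hz₀, hMW'⟩ := (isCompact_closedBall (0:E3) Cu').exists_isMaxOn
    ⟨0, Metric.mem_closedBall_self (le_max_right _ _)⟩
    ((Real.continuous_sqrt.comp hWc).continuousOn)
  set MW := Real.sqrt (W z₀) with hMWdef
  have hMW : ∀ z ∈ Metric.closedBall (0:E3) Cu', Real.sqrt (W z) ≤ MW :=
    fun z hz => hMW' hz
  have hMW0 : 0 ≤ MW := Real.sqrt_nonneg _
  have hest : ∀ x ∈ Ω, ∀ y ∈ Ω, |f y - f x| ≤ MW * ‖u y - u x‖ := by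
    intro x hx y hy
    apply abs_geoDist_sub_le hWpos hWc hξ₀ (hrange x hx) (hrange y hy)
    intro z hz
    exact hMW z ((convex_closedBall _ _).segment_subset (hCu' x hx) (hCu' y hy) hz)
  -- Lipschitz constant for u on a ball containing Ω
  obtain ⟨R₀, hR₀⟩ := hΩb.subset_closedBall 0
  set R₁ : ℝ := max R₀ 0 with hR₁def
  have hΩsub : Ω ⊆ Metric.closedBall 0 R₁ :=
    hR₀.trans (Metric.closedBall_subset_closedBall (le_max_left _ _))
  have hfd : Continuous fun x => fderiv ℝ u x := hu.continuous_fderiv one_ne_zero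
  obtain ⟨x₁, hx₁, hKu'⟩ :=
    (isCompact_closedBall (0:EuclideanSpace ℝ (Fin d)) R₁).exists_isMaxOn
    ⟨0, Metric.mem_closedBall_self (le_max_right _ _)⟩ (hfd.norm.continuousOn)
  set Ku := ‖fderiv ℝ u x₁‖ with hKudef
  have hKu : ∀ z ∈ Metric.closedBall (0:EuclideanSpace ℝ (Fin d)) R₁,
      ‖fderiv ℝ u z‖ ≤ Ku := fun z hz => hKu' hz
  have hKu0 : 0 ≤ Ku := norm_nonneg _
  have huLip : ∀ x ∈ Ω, ∀ y ∈ Ω, ‖u y - u x‖ ≤ Ku * ‖y - x‖ := by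
    intro x hx y hy
    exact (convex_closedBall _ _).norm_image_sub_le_of_norm_fderiv_le
      (fun z _ => (hu.differentiable one_ne_zero).differentiableAt)
      (fun z hz => hKu z hz) (hΩsub hx) (hΩsub hy)
  have hfLip : LipschitzOnWith (Real.toNNReal (MW * Ku)) f Ω := by
    rw [lipschitzOnWith_iff_dist_le_mul]
    intro x hx y hy
    rw [Real.dist_eq, dist_eq_norm]
    have h1 : Real.toNNReal (MW * Ku) * ‖x - y‖ = MW * Ku * ‖x - y‖ := by
      rw [Real.coe_toNNReal _ (mul_nonneg hMW0 hKu0)]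
    rw [h1]
    calc |f x - f y| ≤ MW * ‖u x - u y‖ := hest y hy x hx
      _ ≤ MW * (Ku * ‖x - y‖) := mul_le_mul_of_nonneg_left (huLip y hy x hx) hMW0
      _ = MW * Ku * ‖x - y‖ := by ring
  obtain ⟨g, hgLip, hfg⟩ := hfLip.extend_real
  have hgdiff : ∀ᵐ x ∂(volume : Measure (EuclideanSpace ℝ (Fin d))),
      DifferentiableAt ℝ g x := hgLip.ae_differentiableAt
  have hloc : ∀ x ∈ Ω, f =ᶠ[𝓝 x] g :=
    fun x hx => Filter.eventuallyEq_of_mem (hΩo.mem_nhds hx) hfg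
  have hdiff : ∀ᵐ x ∂(volume.restrict Ω), DifferentiableAt ℝ f x := by
    filter_upwards [ae_restrict_mem hΩo.measurableSet, ae_restrict_of_ae hgdiff]
      with x hxΩ hgx
    exact ((hloc x hxΩ).differentiableAt_iff).2 hgx
  refine ⟨hdiff, ?_⟩
  have hpt : ∀ x ∈ Ω, ‖fderiv ℝ f x‖ ≤ Real.sqrt (W (u x)) * frob (fderiv ℝ u x) := by
    intro x hx
    set A := fderiv ℝ u x with hAdef
    have hA : HasFDerivAt u A x := (hu.differentiable one_ne_zero).differentiableAt.hasFDerivAt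
    have w0 : 0 ≤ Real.sqrt (W (u x)) := Real.sqrt_nonneg _
    have step1 : ‖fderiv ℝ f x‖ ≤ Real.sqrt (W (u x)) * ‖A‖ := by
      have key : ∀ ε : ℝ, 0 < ε →
          ‖fderiv ℝ f x‖ ≤ (Real.sqrt (W (u x)) + ε) * (‖A‖ + ε) := by
        intro ε hε
        apply norm_fderiv_le_of_lip' ℝ (by positivity)
        have ev1 : ∀ᶠ y in 𝓝 x, y ∈ Ω := hΩo.mem_nhds hx
        have ev2 : ∀ᶠ y in 𝓝 x, ‖u y - u x‖ ≤ (‖A‖ + ε) * ‖y - x‖ := by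
          filter_upwards [hA.isLittleO.def hε] with y hy
          calc ‖u y - u x‖ ≤ ‖u y - u x - A (y - x)‖ + ‖A (y - x)‖ := by
                have := norm_add_le (u y - u x - A (y - x)) (A (y - x))
                simpa using this
            _ ≤ ε * ‖y - x‖ + ‖A‖ * ‖y - x‖ := add_le_add hy (A.le_opNorm _)
            _ = (‖A‖ + ε) * ‖y - x‖ := by ring
        have hcsq : ContinuousAt (fun z => Real.sqrt (W z)) (u x) :=
          (Real.continuous_sqrt.comp hWc).continuousAt
        obtain ⟨δ₁, hδ₁, hδ₁'⟩ := Metric.continuousAt_iff.1 hcsq ε hε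
        have ev3 : ∀ᶠ y in 𝓝 x, dist (u y) (u x) < δ₁ := by
          have hux : ContinuousAt u x := hu.continuous.continuousAt
          have := hux (Metric.ball_mem_nhds (u x) hδ₁)
          filter_upwards [this] with y hy
          exact Metric.mem_ball.1 hy
        filter_upwards [ev1, ev2, ev3] with y hy1 hy2 hy3
        have hsegbd : ∀ z ∈ segment ℝ (u x) (u y),
            Real.sqrt (W z) ≤ Real.sqrt (W (u x)) + ε := by
          intro z hz
          have hzball : z ∈ Metric.closedBall (u x) (dist (u y) (u x)) :=
            (convex_closedBall _ _).segment_subset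
              (Metric.mem_closedBall_self dist_nonneg)
              (Metric.mem_closedBall.2 le_rfl) hz
          have hd : dist z (u x) < δ₁ :=
            lt_of_le_of_lt (Metric.mem_closedBall.1 hzball) hy3
          have h2 := hδ₁' hd
          rw [Real.dist_eq] at h2
          have := (abs_lt.1 h2).2
          linarith
        have habs : |f y - f x| ≤ (Real.sqrt (W (u x)) + ε) * ‖u y - u x‖ :=
          abs_geoDist_sub_le hWpos hWc hξ₀ (hrange x hx) (hrange y hy1) hsegbd
        rw [Real.norm_eq_abs]
        calc |f y - f x| ≤ (Real.sqrt (W (u x)) + ε) * ‖u y - u x‖ := habs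
          _ ≤ (Real.sqrt (W (u x)) + ε) * ((‖A‖ + ε) * ‖y - x‖) :=
            mul_le_mul_of_nonneg_left hy2 (by positivity)
          _ = (Real.sqrt (W (u x)) + ε) * (‖A‖ + ε) * ‖y - x‖ := by ring
      have hlim : Tendsto (fun ε : ℝ => (Real.sqrt (W (u x)) + ε) * (‖A‖ + ε))
          (𝓝[>] (0:ℝ)) (𝓝 (Real.sqrt (W (u x)) * ‖A‖)) := by
        have hc : Continuous fun ε : ℝ => (Real.sqrt (W (u x)) + ε) * (‖A‖ + ε) := by
          continuity
        have h0 : Tendsto (fun ε : ℝ => (Real.sqrt (W (u x)) + ε) * (‖A‖ + ε))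
            (𝓝 (0:ℝ)) (𝓝 (Real.sqrt (W (u x)) * ‖A‖)) := by
          have := hc.tendsto 0
          simpa using this
        exact h0.mono_left nhdsWithin_le_nhds
      exact ge_of_tendsto hlim (eventually_nhdsWithin_of_forall fun ε hε => key ε hε)
    calc ‖fderiv ℝ f x‖ ≤ Real.sqrt (W (u x)) * ‖A‖ := step1
      _ ≤ Real.sqrt (W (u x)) * frob A := mul_le_mul_of_nonneg_left (opNorm_le_frob A) w0
  have hΩfin : volume Ω < ⊤ := hΩb.measure_lt_top
  set CD' : ℝ := max CD 0 with hCD'def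
  have hG : ∀ x ∈ Ω, Real.sqrt (W (u x)) * frob (fderiv ℝ u x)
      ≤ MW * (Real.sqrt d * CD') := by
    intro x hx
    apply mul_le_mul (hMW _ (hCu' x hx)) ?_ (frob_nonneg _) hMW0
    calc frob (fderiv ℝ u x) ≤ Real.sqrt d * ‖fderiv ℝ u x‖ := frob_le _
      _ ≤ Real.sqrt d * CD' :=
        mul_le_mul_of_nonneg_left (le_trans (hCD x hx) (le_max_left _ _))
          (Real.sqrt_nonneg _)
  have hFint : IntegrableOn (fun x => ‖fderiv ℝ f x‖) Ω volume := by
    constructor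
    · exact ((measurable_fderiv ℝ f).norm).aestronglyMeasurable.restrict
    · apply HasFiniteIntegral.restrict_of_bounded (C := MW * (Real.sqrt d * CD')) hΩfin
      apply (ae_restrict_mem hΩo.measurableSet).mono
      intro x hx
      rw [norm_norm]
      exact le_trans (hpt x hx) (hG x hx)
  have hGcont : Continuous fun x => Real.sqrt (W (u x)) * frob (fderiv ℝ u x) :=
    (Real.continuous_sqrt.comp (hWc.comp hu.continuous)).mul (frob_continuous hfd)
  have hGint : IntegrableOn (fun x => Real.sqrt (W (u x)) * frob (fderiv ℝ u x)) Ω volume := by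
    constructor
    · exact hGcont.aestronglyMeasurable.restrict
    · apply HasFiniteIntegral.restrict_of_bounded (C := MW * (Real.sqrt d * CD')) hΩfin
      apply (ae_restrict_mem hΩo.measurableSet).mono
      intro x hx
      rw [Real.norm_eq_abs,
        abs_of_nonneg (mul_nonneg (Real.sqrt_nonneg _) (frob_nonneg _))]
      exact hG x hx
  apply integral_mono_ae hFint hGint
  filter_upwards [ae_restrict_mem hΩo.measurableSet] with x hx
  exact hpt x hx
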